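/- Let p be an odd prime and let D be the discriminant form (Z/pZ)^n with quadratic form q(x) = (a_1 x_1^2 + ... + a_n x_n^2)/p mod 1 where each a_i is coprime to p, and suppose n is odd. Then the number of elements γ ∈ D with q(γ) = j/p mod 1 equals p^{n-1} + ε (−1|p)^{(n−1)/2} (2|p) (j|p) p^{(n−1)/2}, where ε = ((2a_1···2a_n)|p). -/

import Mathlib

section CountNormAux

open Finset

variable {p : ℕ} [Fact p.Prime]

local notation "χ" => quadraticChar (ZMod p)

lemma myRingChar (hp : p ≠ 2) : ringChar (ZMod p) ≠ 2 := by
  rw [ZMod.ringChar_zmod_n]; exact hp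

/-- sum over squares -/
lemma sq_sum_aux (hp : p ≠ 2) (g : ZMod p → ℤ) :
    ∑ c : ZMod p, g (c ^ 2) = ∑ t : ZMod p, (χ t + 1) * g t := by
  have h1 : ∀ t : ZMod p, (χ t + 1) * g t
      = ∑ c ∈ univ.filter (fun c : ZMod p => c ^ 2 = t), g (c ^ 2) := by
    intro t
    rw [Finset.sum_congr rfl (fun c hc => by
      rw [(Finset.mem_filter.mp hc).2])]
    rw [Finset.sum_const, nsmul_eq_mul]
    have := quadraticChar_card_sqrts (myRingChar hp) t
    rw [Set.toFinset_setOf] at this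
    rw [this]
  rw [Finset.sum_congr rfl (fun t _ => h1 t)]
  exact (Finset.sum_fiberwise univ (fun c => c ^ 2) (fun c => g (c ^ 2))).symm

lemma chi_inv {b : ZMod p} (hb : b ≠ 0) : χ b⁻¹ = χ b := by
  have h1 : χ b * χ b⁻¹ = 1 := by
    rw [← map_mul, mul_inv_cancel₀ hb, map_one]
  have h2 : χ b * χ b = 1 := by
    have := quadraticChar_sq_one hb; rwa [pow_two] at this
  calc χ b⁻¹ = (χ b * χ b) * χ b⁻¹ := by rw [h2, one_mul]
    _ = χ b * (χ b * χ b⁻¹) := by ring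
    _ = χ b := by rw [h1, mul_one]

/-- number of solutions of b x² = j -/
lemma count_one (hp : p ≠ 2) {b : ZMod p} (hb : b ≠ 0) (j : ZMod p) :
    ((univ.filter fun x : ZMod p => b * x ^ 2 = j).card : ℤ) = 1 + χ b * χ j := by
  have h0 : (univ.filter fun x : ZMod p => b * x ^ 2 = j)
      = univ.filter fun x : ZMod p => x ^ 2 = b⁻¹ * j := by
    apply Finset.filter_congr
    intro x _
    constructor
    · intro h; rw [← h]; field_simp
    · intro h; rw [h]; field_simp
  rw [h0]
  have := quadraticChar_card_sqrts (myRingChar hp) (b⁻¹ * j)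
  rw [Set.toFinset_setOf] at this
  rw [this, map_mul, chi_inv hb]
  ring

/-- the key Jacobi-type sum -/
lemma jacobi_sum (hp : p ≠ 2) (d : ZMod p) :
    ∑ u : ZMod p, χ u * χ (u + d) = if d = 0 then ((p : ℤ) - 1) else -1 := by
  by_cases hd : d = 0
  · simp only [hd, if_true, add_zero]
    have h1 : ∀ u : ZMod p, χ u * χ u = if u = 0 then 0 else 1 := by
      intro u
      by_cases hu : u = 0
      · simp [hu]
      · rw [if_neg hu]
        have := quadraticChar_sq_one hu; rwa [pow_two] at this
    rw [Finset.sum_congr rfl (fun u _ => h1 u)]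
    rw [Finset.sum_ite]
    simp only [Finset.sum_const, smul_zero, zero_add, nsmul_eq_mul, mul_one]
    have : (univ.filter fun u : ZMod p => ¬ u = 0) = univ.erase 0 := by
      ext u; simp [Finset.mem_erase, and_comm]
    rw [this, Finset.card_erase_of_mem (Finset.mem_univ _), Finset.card_univ, ZMod.card]
    have hp1 : 1 ≤ p := (Fact.out : p.Prime).one_lt.le
    push_cast [Nat.cast_sub hp1]
    ring
  · rw [if_neg hd]
    have h0 : ∑ u : ZMod p, χ u * χ (u + d)
        = ∑ u ∈ univ.erase (0 : ZMod p), χ u * χ (u + d) := by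
      rw [Finset.sum_erase_eq_sub (Finset.mem_univ _)]
      simp
    rw [h0]
    have h1 : ∑ u ∈ univ.erase (0 : ZMod p), χ u * χ (u + d)
        = ∑ w ∈ univ.erase (1 : ZMod p), χ w := by
      apply Finset.sum_nbij' (i := fun u => 1 + d * u⁻¹) (j := fun w => d * (w - 1)⁻¹)
      · intro u hu
        have hu0 : u ≠ 0 := Finset.ne_of_mem_erase hu
        refine Finset.mem_erase.mpr ⟨?_, Finset.mem_univ _⟩
        intro h
        have : d * u⁻¹ = 0 := by linear_combination h
        rcases mul_eq_zero.mp this with h' | h'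
        · exact hd h'
        · exact hu0 (by simpa using h')
      · intro w hw
        have hw1 : w ≠ 1 := Finset.ne_of_mem_erase hw
        refine Finset.mem_erase.mpr ⟨?_, Finset.mem_univ _⟩
        intro h
        rcases mul_eq_zero.mp h with h' | h'
        · exact hd h'
        · exact hw1 (by
            have : w - 1 ≠ 0 := sub_ne_zero.mpr hw1
            exact absurd h' (inv_ne_zero this))
      · intro u hu
        have hu0 : u ≠ 0 := Finset.ne_of_mem_erase hu
        field_simp
        simp [hd]
      · intro w hw
        have hw1 : w - 1 ≠ 0 := sub_ne_zero.mpr (Finset.ne_of_mem_erase hw)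
        field_simp
        ring
      · intro u hu
        have hu0 : u ≠ 0 := Finset.ne_of_mem_erase hu
        have : u + d = u * (1 + d * u⁻¹) := by field_simp
        rw [this, map_mul, ← mul_assoc]
        have h2 : χ u * χ u = 1 := by
          have := quadraticChar_sq_one hu0; rwa [pow_two] at this
        rw [h2, one_mul]
    rw [h1, Finset.sum_erase_eq_sub (Finset.mem_univ _),
      quadraticChar_sum_zero (myRingChar hp), map_one]
    ring

lemma chi_quad_sum (hp : p ≠ 2) {b : ZMod p} (hb : b ≠ 0) (j : ZMod p) :
    ∑ c : ZMod p, χ (j - b * c ^ 2)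
      = χ (-b) * (if j = 0 then ((p : ℤ) - 1) else -1) := by
  rw [sq_sum_aux hp (fun t => χ (j - b * t))]
  have split : ∑ t : ZMod p, (χ t + 1) * χ (j - b * t)
      = (∑ t : ZMod p, χ t * χ (j - b * t)) + ∑ t : ZMod p, χ (j - b * t) := by
    rw [← Finset.sum_add_distrib]
    apply Finset.sum_congr rfl
    intro t _; ring
  rw [split]
  have h2 : ∑ t : ZMod p, χ (j - b * t) = 0 := by
    have hbij : Function.Bijective (fun t : ZMod p => j - b * t) := by
      refine Finite.injective_iff_bijective.mp ?_
      intro x y h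
      simp only [sub_right_injective.eq_iff] at h
      exact mul_left_cancel₀ hb (by linear_combination h)
    rw [Fintype.sum_bijective _ hbij (fun t => χ (j - b * t)) (fun s => χ s) (fun t => rfl)]
    exact quadraticChar_sum_zero (myRingChar hp)
  rw [h2, add_zero]
  have h3 : ∀ t : ZMod p, χ t * χ (j - b * t) = χ (-b) * (χ t * χ (t + (-(b⁻¹ * j)))) := by
    intro t
    have : j - b * t = (-b) * (t + (-(b⁻¹ * j))) := by field_simp; ring
    rw [this, map_mul]; ring
  rw [Finset.sum_congr rfl (fun t _ => h3 t), ← Finset.mul_sum, jacobi_sum hp]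
  have : (-(b⁻¹ * j) = 0) ↔ (j = 0) := by
    constructor
    · intro h
      rcases mul_eq_zero.mp (neg_eq_zero.mp h) with h' | h'
      · exact absurd h' (inv_ne_zero hb)
      · exact h'
    · intro h; rw [h]; ring
  by_cases hj : j = 0
  · rw [if_pos hj, if_pos (this.mpr hj)]
  · rw [if_neg hj, if_neg (fun h => hj (this.mp h))]

/-- recursion: split off the first variable -/
lemma count_rec (n : ℕ) (a : Fin (n + 1) → ZMod p) (j : ZMod p) :
    ((univ.filter fun x : Fin (n + 1) → ZMod p => ∑ i, a i * x i ^ 2 = j).card : ℤ)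
      = ∑ c : ZMod p,
          ((univ.filter fun y : Fin n → ZMod p =>
            ∑ i, a i.succ * y i ^ 2 = j - a 0 * c ^ 2).card : ℤ) := by
  have key : ((univ.filter fun x : Fin (n + 1) → ZMod p => ∑ i, a i * x i ^ 2 = j).card : ℤ)
      = ∑ x : Fin (n + 1) → ZMod p, (if ∑ i, a i * x i ^ 2 = j then (1 : ℤ) else 0) := by
    rw [Finset.card_filter]
    push_cast
    rfl
  rw [key]
  rw [← Equiv.sum_comp (Fin.consEquiv (fun _ : Fin (n+1) => ZMod p))
      (fun x => if ∑ i, a i * x i ^ 2 = j then (1 : ℤ) else 0)]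
  rw [Fintype.sum_prod_type]
  apply Finset.sum_congr rfl
  intro c _
  have inner : ∀ y : Fin n → ZMod p,
      (∑ i, a i * (Fin.consEquiv (fun _ : Fin (n+1) => ZMod p) (c, y)) i ^ 2 = j)
      ↔ (∑ i, a i.succ * y i ^ 2 = j - a 0 * c ^ 2) := by
    intro y
    have : ∑ i, a i * (Fin.cons c y : ∀ _ : Fin (n+1), ZMod p) i ^ 2
        = a 0 * c ^ 2 + ∑ i : Fin n, a i.succ * y i ^ 2 := by
      rw [Fin.sum_univ_succ]
      simp [Fin.cons_zero, Fin.cons_succ]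
    simp only [Fin.consEquiv_apply, this]
    constructor
    · intro h; linear_combination h
    · intro h; linear_combination h
  rw [Finset.sum_congr rfl (fun y _ => by rw [if_congr (inner y) rfl rfl])]
  rw [Finset.card_filter]
  push_cast
  rfl

lemma main_count (hp : p ≠ 2) : ∀ (n : ℕ) (a : Fin n → ZMod p), (∀ i, a i ≠ 0) → ∀ j : ZMod p,
    (p : ℤ) * ((univ.filter fun x : Fin n → ZMod p => ∑ i, a i * x i ^ 2 = j).card : ℤ)
      = (p : ℤ) ^ n + (∏ i, χ (a i)) *
        (if Even n then
          χ (-1) ^ (n / 2) * (if j = 0 then ((p : ℤ) - 1) else -1) * (p : ℤ) ^ (n / 2)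
         else χ (-1) ^ (n / 2) * χ j * (p : ℤ) ^ (n / 2 + 1)) := by
  intro n
  induction n with
  | zero =>
    intro a ha j
    have hcond : (univ.filter fun x : Fin 0 → ZMod p => ∑ i, a i * x i ^ 2 = j)
        = univ.filter fun _ : Fin 0 → ZMod p => (0 : ZMod p) = j := by
      apply Finset.filter_congr
      intro x _
      simp
    rw [hcond]
    simp only [Nat.zero_div, pow_zero, Even.zero, if_true, Finset.univ_unique,
      Finset.prod_empty, one_mul]
    by_cases hj : (0 : ZMod p) = j
    · rw [Finset.filter_true_of_mem (fun _ _ => hj)]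
      rw [if_pos hj.symm]
      simp [Finset.card_univ]
    · rw [Finset.filter_false_of_mem (fun _ _ => hj), if_neg (fun h => hj h.symm)]
      simp
  | succ n IH =>
    intro a ha j
    rw [count_rec n a j, Finset.mul_sum]
    rw [Finset.sum_congr rfl
      (fun c _ => IH (fun i => a i.succ) (fun i => ha i.succ) (j - a 0 * c ^ 2))]
    rw [Finset.sum_add_distrib, Finset.sum_const, Finset.card_univ, ZMod.card,
      nsmul_eq_mul, ← Finset.mul_sum]
    set P : ℤ := ∏ i : Fin n, χ (a i.succ) with hP
    have hprod : (∏ i : Fin (n+1), χ (a i)) = χ (a 0) * P := by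
      rw [hP, Fin.prod_univ_succ]
    by_cases hn : Even n
    · -- n even, n+1 odd
      obtain ⟨m, hm⟩ := hn
      have hdiv1 : n / 2 = m := by omega
      have hdiv2 : (n + 1) / 2 = m := by omega
      have heven : Even n := ⟨m, hm⟩
      have hnodd : ¬ Even (n + 1) := by
        simp [Nat.even_add_one, heven]
      simp only [if_pos heven, if_neg hnodd, hdiv1, hdiv2]
      have hsum : ∑ c : ZMod p,
          (if j - a 0 * c ^ 2 = 0 then ((p : ℤ) - 1) else -1)
          = (p : ℤ) * (χ (a 0) * χ j) := by
        have step : ∀ c : ZMod p,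
            (if j - a 0 * c ^ 2 = 0 then ((p : ℤ) - 1) else -1)
            = (if a 0 * c ^ 2 = j then (p : ℤ) else 0) - 1 := by
          intro c
          by_cases h : a 0 * c ^ 2 = j
          · rw [if_pos h, if_pos (by rw [h, sub_self])]
          · rw [if_neg h, if_neg (fun h' => h (by linear_combination -h')), zero_sub]
        rw [Finset.sum_congr rfl (fun c _ => step c), Finset.sum_sub_distrib,
          Finset.sum_const, Finset.card_univ, ZMod.card, nsmul_eq_mul, mul_one]
        rw [← Finset.sum_filter, Finset.sum_const, nsmul_eq_mul]
        rw [count_one hp (ha 0) j]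
        ring
      rw [hprod]
      have e1 : ∀ c : ZMod p,
          χ (-1) ^ m * (if j - a 0 * c ^ 2 = 0 then ((p : ℤ) - 1) else -1) * (p : ℤ) ^ m
          = (χ (-1) ^ m * (p : ℤ) ^ m)
            * (if j - a 0 * c ^ 2 = 0 then ((p : ℤ) - 1) else -1) := fun c => by ring
      rw [Finset.sum_congr rfl (fun c _ => e1 c), ← Finset.mul_sum, hsum, pow_succ, pow_succ]
      ring
    · -- n odd, n+1 even
      have hodd : Odd n := Nat.odd_iff.mpr (Nat.not_even_iff.mp hn)
      obtain ⟨m, hm⟩ := hodd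
      have hdiv1 : n / 2 = m := by omega
      have hdiv2 : (n + 1) / 2 = m + 1 := by omega
      have heven : Even (n + 1) := by
        refine ⟨m + 1, by omega⟩
      simp only [if_neg hn, if_pos heven, hdiv1, hdiv2]
      rw [hprod]
      have hsum := chi_quad_sum hp (ha 0) j
      have e1 : ∀ c : ZMod p,
          χ (-1) ^ m * χ (j - a 0 * c ^ 2) * (p : ℤ) ^ (m + 1)
          = (χ (-1) ^ m * (p : ℤ) ^ (m + 1)) * χ (j - a 0 * c ^ 2) := fun c => by ring
      rw [Finset.sum_congr rfl (fun c _ => e1 c), ← Finset.mul_sum, hsum]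
      have hneg : χ (-(a 0)) = χ (-1) * χ (a 0) := by
        rw [← map_mul, neg_one_mul]
      rw [hneg, pow_succ (p : ℤ) n, pow_succ (χ (-1)) m]
      ring


end CountNormAux

/-- number of elements of norm j/p in the odd p-adic discriminant form
`(ℤ/pℤ)^n` with quadratic form `q(x) = (a₁x₁² + ⋯ + aₙxₙ²)/p`, for `n` odd. -/
theorem count_norm_j_odd_prime_odd_rank (p : ℕ) [Fact p.Prime] (hp : p ≠ 2)
    (n : ℕ) (hn : Odd n) (a : Fin n → ℤ) (ha : ∀ i, ¬ (p : ℤ) ∣ a i) (j : ℤ) :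
    ((Finset.univ.filter fun x : Fin n → ZMod p =>
        (∑ i, (a i : ZMod p) * (x i) ^ 2) = (j : ZMod p)).card : ℤ)
      = (p : ℤ) ^ (n - 1)
        + legendreSym p (∏ i, 2 * a i)
          * (legendreSym p (-1)) ^ ((n - 1) / 2)
          * legendreSym p 2 * legendreSym p j
          * (p : ℤ) ^ ((n - 1) / 2) := by
  obtain ⟨m, hm⟩ := hn
  have hne : ¬ Even n := by
    rw [Nat.not_even_iff]; omega
  have hdiv : n / 2 = m := by omega
  have hd1 : n - 1 = 2 * m := by omega
  have hd2 : (n - 1) / 2 = m := by omega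
  have hnsucc : n + 1 = 2 * (m + 1) := by omega
  have hA : ∀ i, ((a i : ZMod p)) ≠ 0 := fun i h =>
    ha i ((ZMod.intCast_zmod_eq_zero_iff_dvd _ _).mp h)
  have key := main_count hp n (fun i => (a i : ZMod p)) hA (j : ZMod p)
  rw [if_neg hne, hdiv] at key
  have hpne : (p : ℤ) ≠ 0 := Int.natCast_ne_zero.mpr (Fact.out : p.Prime).ne_zero
  apply mul_left_cancel₀ hpne
  rw [key, hd2, hd1]
  have h2 : (2 : ZMod p) ≠ 0 := by
    intro h
    have h' : ((2 : ℕ) : ZMod p) = 0 := by exact_mod_cast h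
    have := (ZMod.natCast_eq_zero_iff 2 p).mp h'
    exact hp ((Nat.prime_dvd_prime_iff_eq (Fact.out : p.Prime) Nat.prime_two).mp this)
  simp only [legendreSym]
  have hcast : ((∏ i, 2 * a i : ℤ) : ZMod p) = ∏ i, (2 * (a i : ZMod p)) := by
    push_cast; rfl
  rw [hcast, map_prod]
  have hc1 : ((-1 : ℤ) : ZMod p) = -1 := by push_cast; rfl
  have hc2 : ((2 : ℤ) : ZMod p) = 2 := by push_cast; rfl
  rw [hc1, hc2]
  have hprodsplit : (∏ i : Fin n, (quadraticChar (ZMod p)) (2 * ((a i : ZMod p))))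
      = (quadraticChar (ZMod p)) 2 ^ n * ∏ i : Fin n, (quadraticChar (ZMod p)) ((a i : ZMod p)) := by
    simp only [map_mul, Finset.prod_mul_distrib, Finset.prod_const, Finset.card_univ,
      Fintype.card_fin]
  rw [hprodsplit]
  have h2pow : ((quadraticChar (ZMod p)) 2) ^ n * (quadraticChar (ZMod p)) 2 = 1 := by
    rw [← pow_succ, hnsucc, pow_mul, quadraticChar_sq_one h2, one_pow]
  have hpn : ((p : ℤ)) ^ n = (p : ℤ) * ((p : ℤ) ^ m * (p : ℤ) ^ m) := by
    rw [hm]; ring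
  rw [hpn, pow_succ ((p : ℤ)) m, two_mul, pow_add]
  set P : ℤ := ∏ i : Fin n, (quadraticChar (ZMod p)) ((a i : ZMod p))
  set C : ℤ := (quadraticChar (ZMod p)) (-1) ^ m
  set J : ℤ := (quadraticChar (ZMod p)) ((j : ZMod p))
  set q : ℤ := (p : ℤ) ^ m
  linear_combination (-((p : ℤ) * q * P * C * J)) * h2pow
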